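/- Let m ≥ 1, Tr the absolute trace of 𝔽_{2^m} over 𝔽_2, d a positive integer, and a, b ∈ 𝔽_{2^m}. Define S₃ = Σ_{x ∈ 𝔽_{2^m}^*} Σ_{y ∈ 𝔽_{2^m}} (−1)^{Tr(x^{d+1} y + x^d y + x) + Tr(a x^d y + b x)}. Then: S₃ = 0 if a = 1; if a = 0 and b ≠ 0 then S₃ = 2^m if Tr(b+1) = 0 and S₃ = −2^m if Tr(b+1) = 1; and if a ∉ {0,1} then S₃ = 2^m if Tr((a+1)(b+1)) = 0 and S₃ = −2^m if Tr((a+1)(b+1)) = 1. -/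
import Mathlib


open Finset
open scoped Classical

variable {F : Type*} [Field F] [Fintype F] [Algebra (ZMod 2) F]

noncomputable def Tr (z : F) : ZMod 2 := Algebra.trace (ZMod 2) F z

noncomputable def chi (z : F) : ℤ := (-1) ^ (Tr z).val

noncomputable def S3 (d : ℕ) (a b : F) : ℤ :=
  ∑ x ∈ univ.filter (fun x : F => x ≠ 0), ∑ y : F,
    chi (x ^ (d + 1) * y + x ^ d * y + x) * chi (a * x ^ d * y + b * x)

set_option linter.unusedSectionVars false

lemma charPF : CharP F 2 :=
  charP_of_injective_algebraMap (algebraMap (ZMod 2) F).injective 2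

lemma neg_one_pow_add : ∀ s t : ZMod 2,
    ((-1 : ℤ)) ^ ((s + t).val) = (-1) ^ s.val * (-1) ^ t.val := by decide

lemma Tr_add (u v : F) : Tr (u + v) = Tr u + Tr v := by
  simp [Tr, map_add]

lemma chi_add (u v : F) : chi (u + v) = chi u * chi v := by
  simp [chi, Tr_add, neg_one_pow_add]

lemma chi_zero : chi (0 : F) = 1 := by
  simp [chi, Tr]

lemma exists_tr_one : ∃ t : F, Tr t = 1 := by
  have : FiniteDimensional (ZMod 2) F := Module.Finite.of_finite
  obtain ⟨t, ht⟩ := Algebra.trace_surjective (ZMod 2) F 1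
  exact ⟨t, ht⟩

lemma sum_chi : (∑ y : F, chi y) = 0 := by
  obtain ⟨t, ht⟩ := exists_tr_one (F := F)
  have hchit : chi t = -1 := by simp [chi, ht, ZMod.val_one]
  have h1 : (∑ y : F, chi (y + t)) = ∑ y : F, chi y :=
    Fintype.sum_equiv (Equiv.addRight t) _ _ (fun y => rfl)
  have h2 : (∑ y : F, chi (y + t)) = -∑ y : F, chi y := by
    simp [chi_add, hchit]
  rw [h2] at h1
  linarith

lemma sum_chi_mul (c : F) (hc : c ≠ 0) : (∑ y : F, chi (c * y)) = 0 := by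
  rw [← sum_chi (F := F)]
  exact Fintype.sum_equiv (Equiv.mulLeft₀ c hc) _ _ (fun y => rfl)

lemma key (d : ℕ) (hd : 1 ≤ d) (a b : F) :
    S3 d a b = if a = 1 then 0 else (Fintype.card F : ℤ) * chi ((a + 1) * (b + 1)) := by
  have hchar : CharP F 2 := charPF
  have h11 : (1 : F) + 1 = 0 := by
    have := CharP.cast_eq_zero F 2
    rw [show ((2 : ℕ) : F) = 1 + 1 by push_cast; ring] at this
    exact this
  have h2 : ∀ u : F, u + u = 0 := fun u => by
    have : u + u = (1 + 1) * u := by ring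
    rw [this, h11, zero_mul]
  have hinner : ∀ x : F, x ≠ 0 →
      (∑ y : F, chi (x ^ (d + 1) * y + x ^ d * y + x) * chi (a * x ^ d * y + b * x))
      = chi ((1 + b) * x) * ∑ y : F, chi ((x ^ d * (x + 1 + a)) * y) := by
    intro x hx
    rw [Finset.mul_sum]
    apply Finset.sum_congr rfl
    intro y _
    rw [← chi_add, ← chi_add]
    congr 1
    rw [pow_succ]
    ring
  have step : S3 d a b = ∑ x ∈ univ.filter (fun x : F => x ≠ 0),
      chi ((1 + b) * x) * ∑ y : F, chi ((x ^ d * (x + 1 + a)) * y) := by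
    unfold S3
    exact Finset.sum_congr rfl fun x hx => hinner x (by simpa using hx)
  by_cases ha : a = 1
  · rw [if_pos ha, step]
    apply Finset.sum_eq_zero
    intro x hx
    have hx0 : x ≠ 0 := by simpa using hx
    have hxa : x + 1 + a = x := by
      subst ha; rw [add_assoc, h11, add_zero]
    rw [hxa, sum_chi_mul _ (mul_ne_zero (pow_ne_zero _ hx0) hx0), mul_zero]
  · rw [if_neg ha, step]
    have hx0 : a + 1 ≠ 0 := by
      intro h
      apply ha
      have : a = (a + 1) + 1 := by rw [add_assoc, h11, add_zero]
      rw [h, zero_add] at this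
      exact this
    rw [Finset.sum_eq_single (a + 1)]
    · have hc : (a + 1) + 1 + a = 0 := by
        have : (a + 1) + 1 + a = (a + a) + (1 + 1) := by ring
        rw [this, h2, h11, add_zero]
      rw [hc, mul_zero]
      simp only [zero_mul, chi_zero]
      rw [Finset.sum_const, card_univ, nsmul_eq_mul, mul_one]
      rw [mul_comm]
      congr 1
      rw [add_comm 1 b, mul_comm]
    · intro x hx hne
      have hxne : x ≠ 0 := by simpa using hx
      have hcne : x + 1 + a ≠ 0 := by
        intro h
        apply hne
        have : x + 1 + a + (1 + a) = 1 + a := by rw [h, zero_add]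
        rw [show x + 1 + a + (1 + a) = x + ((1 + a) + (1 + a)) by ring, h2, add_zero] at this
        rw [this, add_comm]
      rw [sum_chi_mul _ (mul_ne_zero (pow_ne_zero _ hxne) hcne), mul_zero]
    · intro h
      exfalso
      apply h
      simp [hx0]

lemma chi_of_tr_zero {z : F} (h : Tr z = 0) : chi z = 1 := by simp [chi, h]

lemma chi_of_tr_one {z : F} (h : Tr z = 1) : chi z = -1 := by
  simp [chi, h, ZMod.val_one]

theorem stmt4 (m d : ℕ) (hm : 1 ≤ m) (hd : 1 ≤ d) (hF : Fintype.card F = 2 ^ m)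
    (a b : F) :
    (a = 1 → S3 d a b = 0) ∧
    (a = 0 → b ≠ 0 →
      ((Tr (b + 1) = 0 → S3 d a b = (2 ^ m : ℤ)) ∧
       (Tr (b + 1) = 1 → S3 d a b = -(2 ^ m : ℤ)))) ∧
    (a ≠ 0 → a ≠ 1 →
      ((Tr ((a + 1) * (b + 1)) = 0 → S3 d a b = (2 ^ m : ℤ)) ∧
       (Tr ((a + 1) * (b + 1)) = 1 → S3 d a b = -(2 ^ m : ℤ)))) := by
  have hkey := key d hd a b
  refine ⟨fun ha => by rw [hkey, if_pos ha], ?_, ?_⟩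
  · intro ha hb
    subst ha
    have h01 : (0 : F) ≠ 1 := zero_ne_one
    rw [hkey, if_neg h01, zero_add, one_mul, hF]
    constructor
    · intro h; rw [chi_of_tr_zero h, mul_one]; push_cast; ring
    · intro h; rw [chi_of_tr_one h]; push_cast; ring
  · intro _ ha
    rw [hkey, if_neg ha, hF]
    constructor
    · intro h; rw [chi_of_tr_zero h, mul_one]; push_cast; ring
    · intro h; rw [chi_of_tr_one h]; push_cast; ring
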